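/- In the inclusion game, prover has a winning strategy for the emptiness game from a sentential form α (i.e., a strategy ensuring every maximal conforming play from α is infinite) if and only if the least fixed-point solution satisfies σ(α) ≡ false. -/

import Mathlib

/-- Negation-free Boolean formulas over atomic propositions (boxes) `B`,
with a distinguished formula `fls` (false). -/
inductive Formula (B : Type) : Type where
  | fls : Formula B
  | box : B → Formula B
  | and : Formula B → Formula B → Formula B
  | or : Formula B → Formula B → Formula B

namespace Formula

variable {B : Type}

/-- Satisfaction under a truth assignment to the boxes. -/
def sat (ν : B → Prop) : Formula B → Prop
  | fls => False
  | box b => ν b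
  | and F G => F.sat ν ∧ G.sat ν
  | or F G => F.sat ν ∨ G.sat ν

/-- Logical equivalence of formulas. -/
def Equiv (F G : Formula B) : Prop := ∀ ν : B → Prop, F.sat ν ↔ G.sat ν

/-- Composition of a box with a formula. -/
def boxSeq [Mul B] (r : B) : Formula B → Formula B
  | fls => fls
  | box t => box (r * t)
  | and G1 G2 => and (boxSeq r G1) (boxSeq r G2)
  | or G1 G2 => or (boxSeq r G1) (boxSeq r G2)

/-- Relational composition of formulas: `false;G = F;false = false`, it
distributes over `∧`/`∨` on the left, and boxes distribute over `∧`/`∨`. -/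
def seq [Mul B] : Formula B → Formula B → Formula B
  | fls, _ => fls
  | box r, G => boxSeq r G
  | and F1 F2, G => and (F1.seq G) (F2.seq G)
  | or F1 F2, G => or (F1.seq G) (F2.seq G)

end Formula

/-- A context-free grammar with an ownership partitioning of the
non-terminals (`prover X = true` iff `X` is owned by prover); every
non-terminal has at least one rule. -/
structure GameGrammar (N T : Type) where
  prover : N → Bool
  rules : N → List (List (N ⊕ T))
  rules_nonempty : ∀ X, rules X ≠ []

/-- Sentential forms: words over non-terminals and terminals. -/
abbrev SF (N T : Type) := List (N ⊕ T)

variable {N T B : Type}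

/-- Interpretation of a sentential form under an assignment `σ` of formulas
to non-terminals: `ε ↦ id`, terminals `a ↦ ⟦a⟧`, concatenation ↦ relational
composition. -/
def interpSF [Mul B] [One B] (boxT : T → B) (σ : N → Formula B) : SF N T → Formula B
  | [] => Formula.box 1
  | (Sum.inl X) :: rest => (σ X).seq (interpSF boxT σ rest)
  | (Sum.inr a) :: rest => (Formula.box (boxT a)).seq (interpSF boxT σ rest)

/-- Combine a (nonempty) list of formulas by conjunction (`isAnd = true`) or
disjunction. -/
def combineList (isAnd : Bool) : List (Formula B) → Formula B
  | [] => Formula.fls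
  | F :: rest =>
      rest.foldl (fun acc G => if isAnd then Formula.and acc G else Formula.or acc G) F

/-- One application of the system of equations: the right-hand side for `X` is
the conjunction (if prover owns `X`) or disjunction (if refuter owns `X`) of
the interpretations of the right-hand sides of `X`'s rules. -/
def eqStep [Mul B] [One B] (G : GameGrammar N T) (boxT : T → B)
    (σ : N → Formula B) : N → Formula B :=
  fun X => combineList (G.prover X) ((G.rules X).map (interpSF boxT σ))

/-- The `i`-th Kleene approximant, starting from `false` everywhere. -/
def approx [Mul B] [One B] (G : GameGrammar N T) (boxT : T → B) : ℕ → N → Formula B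
  | 0 => fun _ => Formula.fls
  | i + 1 => eqStep G boxT (approx G boxT i)

/-- A sentential form is a terminal word. -/
def IsTerminalSF (α : SF N T) : Prop := ∀ s ∈ α, ∃ a : T, s = Sum.inr a

/-- The left-derivation relation: replace the leftmost non-terminal using a
rule of the grammar. -/
def Derives (G : GameGrammar N T) (α β : SF N T) : Prop :=
  ∃ (w : List T) (X : N) (η : List (N ⊕ T)) (γ : SF N T),
    α = w.map Sum.inr ++ Sum.inl X :: γ ∧ η ∈ G.rules X ∧
    β = w.map Sum.inr ++ (η ++ γ)

/-- It is prover's turn: the leftmost non-terminal is owned by prover. -/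
def ProverTurn (G : GameGrammar N T) (α : SF N T) : Prop :=
  ∃ (w : List T) (X : N) (γ : SF N T),
    α = w.map Sum.inr ++ Sum.inl X :: γ ∧ G.prover X = true

/-- A finite play from `α`: a nonempty sequence of positions starting in `α`
and linked by left-derivation steps. -/
def IsPlay (G : GameGrammar N T) (α : SF N T) (p : List (SF N T)) : Prop :=
  p.head? = some α ∧ p.Chain' (Derives G)

/-- A finite play conforms to the strategy `s` of the player whose turns are
described by `turn`: whenever it is that player's turn, the next position is
the one returned by the strategy. -/
def Conforms (turn : SF N T → Prop) (s : List (SF N T) → SF N T)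
    (p : List (SF N T)) : Prop :=
  ∀ (i : ℕ) (h : i + 1 < p.length),
    turn (p.get ⟨i, Nat.lt_of_succ_lt h⟩) →
    p.get ⟨i + 1, h⟩ = s (p.take (i + 1))

/-- Prover has a winning strategy for the emptiness game from `α`: a strategy
returning legal moves at her turns such that no conforming finite play ends in
a terminal word, i.e. every maximal conforming play is infinite. -/
def ProverWinsEmptiness (G : GameGrammar N T) (α : SF N T) : Prop :=
  ∃ s : List (SF N T) → SF N T,
    (∀ p : List (SF N T), IsPlay G α p → Conforms (ProverTurn G) s p →
      ProverTurn G p.getLast! → Derives G p.getLast! (s p)) ∧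
    (∀ p : List (SF N T), IsPlay G α p → Conforms (ProverTurn G) s p →
      ¬ IsTerminalSF p.getLast!)

/-! ### Auxiliary development -/

section Aux

open Formula

/-- Truth of a formula under the all-true assignment. -/
def Pf (F : Formula B) : Prop := F.sat fun _ => True

@[simp] lemma Pf_fls : Pf (Formula.fls : Formula B) ↔ False := Iff.rfl
@[simp] lemma Pf_box {b : B} : Pf (Formula.box b) ↔ True := by simp [Pf, Formula.sat]
@[simp] lemma Pf_and {F F' : Formula B} : Pf (F.and F') ↔ Pf F ∧ Pf F' := Iff.rfl
@[simp] lemma Pf_or {F F' : Formula B} : Pf (F.or F') ↔ Pf F ∨ Pf F' := Iff.rfl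

lemma sat_mono {ν ν' : B → Prop} (h : ∀ b, ν b → ν' b) :
    ∀ {F : Formula B}, F.sat ν → F.sat ν'
  | .fls, hF => hF
  | .box b, hF => h b hF
  | .and _ _, hF => ⟨sat_mono h hF.1, sat_mono h hF.2⟩
  | .or _ _, hF => hF.imp (sat_mono h) (sat_mono h)

lemma equiv_fls {F : Formula B} : Formula.Equiv F Formula.fls ↔ ¬ Pf F := by
  constructor
  · intro h hP; exact (h (fun _ => True)).mp hP
  · intro h ν
    constructor
    · intro hs; exact absurd (sat_mono (fun b _ => trivial) hs) h
    · intro hs; exact hs.elim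

lemma Pf_boxSeq [Mul B] {r : B} : ∀ {F : Formula B}, Pf (Formula.boxSeq r F) ↔ Pf F
  | .fls => Iff.rfl
  | .box t => by simp [Formula.boxSeq]
  | .and F1 F2 => by
      show Pf ((Formula.boxSeq r F1).and (Formula.boxSeq r F2)) ↔ _
      simp [Pf_boxSeq (F := F1), Pf_boxSeq (F := F2)]
  | .or F1 F2 => by
      show Pf ((Formula.boxSeq r F1).or (Formula.boxSeq r F2)) ↔ _
      simp [Pf_boxSeq (F := F1), Pf_boxSeq (F := F2)]

lemma Pf_seq [Mul B] : ∀ (F F' : Formula B), Pf (F.seq F') ↔ (Pf F ∧ Pf F')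
  | .fls, F' => by simp [Formula.seq]
  | .box r, F' => by
      show Pf (Formula.boxSeq r F') ↔ _
      simp [Pf_boxSeq]
  | .and F1 F2, F' => by
      show Pf ((F1.seq F').and (F2.seq F')) ↔ _
      simp [Pf_seq F1 F', Pf_seq F2 F']; tauto
  | .or F1 F2, F' => by
      show Pf ((F1.seq F').or (F2.seq F')) ↔ _
      simp [Pf_seq F1 F', Pf_seq F2 F']; tauto

lemma Pf_interp [Mul B] [One B] (boxT : T → B) (σ : N → Formula B) :
    ∀ (β : SF N T), Pf (interpSF boxT σ β) ↔ ∀ X : N, Sum.inl X ∈ β → Pf (σ X)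
  | [] => by simp [interpSF]
  | Sum.inl X :: rest => by
      simp only [interpSF, Pf_seq, Pf_interp boxT σ rest, List.mem_cons]
      constructor
      · rintro ⟨h1, h2⟩ Y (hY | hY)
        · cases hY; exact h1
        · exact h2 Y hY
      · intro h
        exact ⟨h X (Or.inl rfl), fun Y hY => h Y (Or.inr hY)⟩
  | Sum.inr a :: rest => by
      simp only [interpSF, Pf_seq, Pf_interp boxT σ rest, List.mem_cons, Pf_box, true_and]
      constructor
      · rintro h Y (hY | hY)
        · exact absurd hY (by simp)
        · exact h Y hY
      · intro h Y hY; exact h Y (Or.inr hY)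

lemma Pf_foldl_and : ∀ (l : List (Formula B)) (F : Formula B),
    Pf (l.foldl (fun acc G => Formula.and acc G) F) ↔ (Pf F ∧ ∀ G ∈ l, Pf G)
  | [], F => by simp
  | G :: l, F => by
      simp only [List.foldl_cons, Pf_foldl_and l (F.and G), Pf_and, List.mem_cons]
      constructor
      · rintro ⟨⟨h1, h2⟩, h3⟩
        exact ⟨h1, fun H hH => hH.elim (fun e => e ▸ h2) (h3 H)⟩
      · rintro ⟨h1, h2⟩
        exact ⟨⟨h1, h2 G (Or.inl rfl)⟩, fun H hH => h2 H (Or.inr hH)⟩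

lemma Pf_foldl_or : ∀ (l : List (Formula B)) (F : Formula B),
    Pf (l.foldl (fun acc G => Formula.or acc G) F) ↔ (Pf F ∨ ∃ G ∈ l, Pf G)
  | [], F => by simp
  | G :: l, F => by
      simp only [List.foldl_cons, Pf_foldl_or l (F.or G), Pf_or, List.mem_cons]
      constructor
      · rintro ((h | h) | ⟨H, hH, h⟩)
        · exact Or.inl h
        · exact Or.inr ⟨G, Or.inl rfl, h⟩
        · exact Or.inr ⟨H, Or.inr hH, h⟩
      · rintro (h | ⟨H, (rfl | hH), h⟩)
        · exact Or.inl (Or.inl h)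
        · exact Or.inl (Or.inr h)
        · exact Or.inr ⟨H, hH, h⟩

lemma Pf_combine_true : ∀ (l : List (Formula B)),
    Pf (combineList true l) ↔ (l ≠ [] ∧ ∀ F ∈ l, Pf F)
  | [] => by simp [combineList]
  | F :: l => by
      have : combineList true (F :: l) = l.foldl (fun acc G => Formula.and acc G) F := by
        simp [combineList]
      rw [this, Pf_foldl_and]
      simp only [ne_eq, List.cons_ne_nil, not_false_iff, true_and, List.mem_cons]
      constructor
      · rintro ⟨h1, h2⟩ H hH
        exact hH.elim (fun e => e ▸ h1) (h2 H)
      · intro h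
        exact ⟨h F (Or.inl rfl), fun H hH => h H (Or.inr hH)⟩

lemma Pf_combine_false : ∀ (l : List (Formula B)),
    Pf (combineList false l) ↔ ∃ F ∈ l, Pf F
  | [] => by simp [combineList]
  | F :: l => by
      have : combineList false (F :: l) = l.foldl (fun acc G => Formula.or acc G) F := by
        simp [combineList]
      rw [this, Pf_foldl_or]
      simp only [List.mem_cons]
      constructor
      · rintro (h | ⟨H, hH, h⟩)
        · exact ⟨F, Or.inl rfl, h⟩
        · exact ⟨H, Or.inr hH, h⟩
      · rintro ⟨H, (rfl | hH), h⟩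
        · exact Or.inl h
        · exact Or.inr ⟨H, hH, h⟩

variable [Mul B] [One B] (G : GameGrammar N T) (boxT : T → B)

/-- The semantic predicate: all non-terminals appearing in the sentential form
have a true value at approximation level `k`. -/
def Qk (k : ℕ) (β : SF N T) : Prop :=
  ∀ X : N, Sum.inl X ∈ β → Pf (approx G boxT k X)

lemma Qk_interp {k : ℕ} {β : SF N T} :
    Pf (interpSF boxT (approx G boxT k) β) ↔ Qk G boxT k β :=
  Pf_interp boxT _ β

lemma Qk_append {k : ℕ} {u v : SF N T} :
    Qk G boxT k (u ++ v) ↔ Qk G boxT k u ∧ Qk G boxT k v := by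
  simp [Qk, List.mem_append, or_imp, forall_and]

lemma Qk_cons_inl {k : ℕ} {X : N} {γ : SF N T} :
    Qk G boxT k (Sum.inl X :: γ) ↔ Pf (approx G boxT k X) ∧ Qk G boxT k γ := by
  simp [Qk, List.mem_cons, or_imp, forall_and]

lemma Qk_cons_inr {k : ℕ} {a : T} {γ : SF N T} :
    Qk G boxT k (Sum.inr a :: γ) ↔ Qk G boxT k γ := by
  simp [Qk, List.mem_cons, or_imp, forall_and]

lemma Qk_map_inr {k : ℕ} {w : List T} : Qk G boxT k (w.map Sum.inr) := by
  intro X hX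
  simp [List.mem_map] at hX

lemma Qk_terminal {k : ℕ} {β : SF N T} (h : IsTerminalSF β) : Qk G boxT k β := by
  intro X hX
  obtain ⟨a, ha⟩ := h _ hX
  exact absurd ha (by simp)

lemma Pf_approx_succ (k : ℕ) (X : N) :
    Pf (approx G boxT (k + 1) X) ↔
      if G.prover X then (∀ η ∈ G.rules X, Qk G boxT k η)
      else (∃ η ∈ G.rules X, Qk G boxT k η) := by
  show Pf (combineList (G.prover X) ((G.rules X).map (interpSF boxT (approx G boxT k)))) ↔ _
  cases h : G.prover X with
  | true =>
      rw [Pf_combine_true]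
      rw [if_pos rfl]
      simp only [ne_eq, List.map_eq_nil_iff]
      constructor
      · rintro ⟨_, h2⟩ η hη
        exact (Qk_interp G boxT).mp (h2 _ (List.mem_map_of_mem hη))
      · intro h2
        refine ⟨G.rules_nonempty X, ?_⟩
        rintro F hF
        obtain ⟨η, hη, rfl⟩ := List.mem_map.mp hF
        exact (Qk_interp G boxT).mpr (h2 η hη)
  | false =>
      rw [Pf_combine_false, if_neg (by simp)]
      constructor
      · rintro ⟨F, hF, h2⟩
        obtain ⟨η, hη, rfl⟩ := List.mem_map.mp hF
        exact ⟨η, hη, (Qk_interp G boxT).mp h2⟩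
      · rintro ⟨η, hη, h2⟩
        exact ⟨_, List.mem_map_of_mem hη, (Qk_interp G boxT).mpr h2⟩

/-- Uniqueness of the leftmost-non-terminal decomposition. -/
lemma decomp_unique : ∀ (w w' : List T) {X X' : N} {γ γ' : SF N T},
    (w.map Sum.inr ++ Sum.inl X :: γ : SF N T) = w'.map Sum.inr ++ Sum.inl X' :: γ' →
    w = w' ∧ X = X' ∧ γ = γ'
  | [], [], X, X', γ, γ', h => by
      simp only [List.map_nil, List.nil_append, List.cons.injEq, Sum.inl.injEq] at h
      exact ⟨rfl, h.1, h.2⟩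
  | [], a :: w', X, X', γ, γ', h => by
      simp only [List.map_nil, List.nil_append, List.map_cons, List.cons_append,
        List.cons.injEq] at h
      exact absurd h.1 (by simp)
  | a :: w, [], X, X', γ, γ', h => by
      simp only [List.map_nil, List.nil_append, List.map_cons, List.cons_append,
        List.cons.injEq] at h
      exact absurd h.1 (by simp)
  | a :: w, a' :: w', X, X', γ, γ', h => by
      simp only [List.map_cons, List.cons_append, List.cons.injEq, Sum.inr.injEq] at h
      obtain ⟨rfl, h2⟩ := h
      obtain ⟨rfl, rfl, rfl⟩ := decomp_unique w w' h2
      exact ⟨rfl, rfl, rfl⟩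

lemma decomp_exists : ∀ (β : SF N T), ¬ IsTerminalSF β →
    ∃ (w : List T) (X : N) (γ : SF N T), β = w.map Sum.inr ++ Sum.inl X :: γ
  | [], h => absurd (fun s hs => absurd hs List.not_mem_nil) h
  | Sum.inl X :: rest, _ => ⟨[], X, rest, rfl⟩
  | Sum.inr a :: rest, h => by
      have hrest : ¬ IsTerminalSF rest := by
        intro hr
        exact h (fun s hs => by
          rcases List.mem_cons.mp hs with rfl | hs
          · exact ⟨a, rfl⟩
          · exact hr s hs)
      obtain ⟨w, X, γ, rfl⟩ := decomp_exists rest hrest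
      exact ⟨a :: w, X, γ, rfl⟩

lemma terminal_no_derives {β δ : SF N T} (h : IsTerminalSF β) : ¬ Derives G β δ := by
  rintro ⟨w, X, η, γ, rfl, -, -⟩
  obtain ⟨a, ha⟩ := h (Sum.inl X) (by simp)
  exact absurd ha (by simp)

/-- Refuter can force the play into a terminal word. -/
inductive RefWin : SF N T → Prop where
  | term (β : SF N T) (h : IsTerminalSF β) : RefWin β
  | ref (w : List T) (X : N) (γ : SF N T) (η : List (N ⊕ T)) (hη : η ∈ G.rules X)
      (hX : G.prover X = false)
      (h : RefWin (w.map Sum.inr ++ (η ++ γ))) :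
      RefWin (w.map Sum.inr ++ Sum.inl X :: γ)
  | prov (w : List T) (X : N) (γ : SF N T) (hX : G.prover X = true)
      (h : ∀ η ∈ G.rules X, RefWin (w.map Sum.inr ++ (η ++ γ))) :
      RefWin (w.map Sum.inr ++ Sum.inl X :: γ)

lemma RefWin.cons_inr {β : SF N T} (a : T) (h : RefWin G β) :
    RefWin G (Sum.inr a :: β) := by
  induction h with
  | term β hβ =>
      refine RefWin.term (G := G) _ (fun s hs => ?_)
      rcases List.mem_cons.mp hs with rfl | hs
      · exact ⟨a, rfl⟩
      · exact hβ s hs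
  | ref w X γ η hη hX h ih =>
      exact RefWin.ref (a :: w) X γ η hη hX (by simpa using ih)
  | prov w X γ hX h ih =>
      exact RefWin.prov (a :: w) X γ hX (fun η hη => by simpa using ih η hη)

lemma RefWin.nil : RefWin G ([] : SF N T) :=
  RefWin.term _ (fun s hs => absurd hs List.not_mem_nil)

/-- Key lemma: if `Qk m η` then refuter can force `η ++ γ` to a terminal word,
provided he can force `γ`. -/
lemma qk_refwin : ∀ (m : ℕ) (η γ : SF N T), Qk G boxT m η → RefWin G γ →
    RefWin G (η ++ γ)
  | _, [], γ, _, hγ => hγ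
  | m, Sum.inr a :: rest, γ, hQ, hγ =>
      (qk_refwin m rest γ ((Qk_cons_inr G boxT).mp hQ) hγ).cons_inr G a
  | 0, Sum.inl X :: rest, γ, hQ, _ =>
      absurd (hQ X List.mem_cons_self) (by simp [approx])
  | (m + 1), Sum.inl X :: rest, γ, hQ, hγ => by
      obtain ⟨hX, hrest⟩ := (Qk_cons_inl G boxT).mp hQ
      have hRrest : RefWin G (rest ++ γ) := qk_refwin (m + 1) rest γ hrest hγ
      rw [Pf_approx_succ] at hX
      by_cases hp : G.prover X = true
      · rw [if_pos hp] at hX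
        have := RefWin.prov [] X (rest ++ γ) hp (fun η' hη' => by
          simpa using qk_refwin m η' (rest ++ γ) (hX η' hη') hRrest)
        simpa using this
      · rw [if_neg hp] at hX
        obtain ⟨η', hη', hQη'⟩ := hX
        have := RefWin.ref [] X (rest ++ γ) η' hη' (Bool.not_eq_true _ ▸ hp) (by
          simpa using qk_refwin m η' (rest ++ γ) hQη' hRrest)
        simpa using this
  termination_by m η => (m, η.length)

/-! ### Plays -/

lemma getLast!_eq_get {X : Type} [Inhabited X] (l : List X) (h : l ≠ []) :
    l.getLast! = l.getLast h :=
  List.getLast!_of_getLast? (List.getLast?_eq_getLast h)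

lemma getLast!_concat {X : Type} [Inhabited X] (l : List X) (x : X) :
    (l ++ [x]).getLast! = x :=
  List.getLast!_of_getLast? List.getLast?_concat

lemma getLast!_eq_getElem {X : Type} [Inhabited X] (l : List X) (h : l ≠ []) :
    l.getLast! = l[l.length - 1]'(by
      cases l with
      | nil => exact absurd rfl h
      | cons a l => simp) := by
  rw [getLast!_eq_get l h, List.getLast_eq_getElem]

lemma getLast!_take {X : Type} [Inhabited X] (l : List X) (i : ℕ) (h : i < l.length) :
    (l.take (i + 1)).getLast! = l[i] := by
  have hne : l.take (i + 1) ≠ [] := by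
    have : (l.take (i + 1)).length = i + 1 := by
      rw [List.length_take]; omega
    intro he
    rw [he] at this
    simp at this
  rw [getLast!_eq_getElem _ hne]
  have hlen : (l.take (i + 1)).length = i + 1 := by
    rw [List.length_take]; omega
  have : (l.take (i+1)).length - 1 = i := by omega
  simp only [this]
  rw [List.getElem_take]

lemma play_ne_nil {α : SF N T} {p : List (SF N T)} (hp : IsPlay G α p) : p ≠ [] := by
  intro h
  rw [h] at hp
  exact absurd hp.1 (by simp)

lemma play_getLast! {α : SF N T} {p : List (SF N T)} (hp : IsPlay G α p) :
    p.getLast! = p[p.length - 1]'(by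
      have := play_ne_nil G hp
      cases p with
      | nil => exact absurd rfl this
      | cons a l => simp) :=
  getLast!_eq_getElem p (play_ne_nil G hp)

lemma play_singleton (α : SF N T) : IsPlay G α [α] := ⟨rfl, List.isChain_singleton α⟩

lemma conforms_singleton (s : List (SF N T) → SF N T) (α : SF N T) :
    Conforms (ProverTurn G) s [α] := by
  intro i h
  simp at h

lemma play_extend {α : SF N T} (s : List (SF N T) → SF N T) (p : List (SF N T))
    (hp : IsPlay G α p) (hc : Conforms (ProverTurn G) s p) (δ : SF N T)
    (hd : Derives G p.getLast! δ) (hok : ProverTurn G p.getLast! → δ = s p) :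
    IsPlay G α (p ++ [δ]) ∧ Conforms (ProverTurn G) s (p ++ [δ]) := by
  have hne := play_ne_nil G hp
  have hplay : IsPlay G α (p ++ [δ]) := by
    constructor
    · rw [List.head?_append_of_ne_nil _ hne]
      exact hp.1
    · show List.IsChain (Derives G) (p ++ [δ])
      rw [List.isChain_append]
      refine ⟨hp.2, List.isChain_singleton δ, ?_⟩
      intro x hx y hy
      simp only [List.head?_cons, Option.mem_def, Option.some.injEq] at hy
      subst hy
      rw [List.getLast?_eq_getLast hne, Option.mem_def, Option.some.injEq] at hx
      subst hx
      rwa [getLast!_eq_get p hne] at hd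
  refine ⟨hplay, ?_⟩
  intro i h hturn
  have hlen : i + 1 < p.length + 1 := by simpa using h
  simp only [List.get_eq_getElem] at hturn ⊢
  by_cases hi : i + 1 < p.length
  · rw [List.getElem_append_left (Nat.lt_of_succ_lt hi)] at hturn
    rw [List.getElem_append_left hi]
    rw [List.take_append_of_le_length (by omega)]
    exact hc i hi (by simpa using hturn)
  · have hip : i + 1 = p.length := by omega
    have hi' : i < p.length := by omega
    rw [List.getElem_append_left hi'] at hturn
    have hgl : p[i] = p.getLast! := by
      rw [play_getLast! G hp]
      congr 1
      omega
    rw [hgl] at hturn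
    have hδ : δ = s p := hok hturn
    have h1 : (p ++ [δ])[i + 1]'h = δ := by
      rw [List.getElem_append_right (by omega)]
      simp [hip]
    have h2 : (p ++ [δ]).take (i + 1) = p := by
      rw [hip, List.take_left]
    rw [h1, h2, hδ]

lemma not_proverTurn {β : SF N T} {w : List T} {X : N} {γ : SF N T}
    (hβ : β = w.map Sum.inr ++ Sum.inl X :: γ) (hX : G.prover X = false) :
    ¬ ProverTurn G β := by
  rintro ⟨w', X', γ', hβ', hX'⟩
  rw [hβ] at hβ'
  obtain ⟨rfl, rfl, rfl⟩ := decomp_unique w w' hβ'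
  rw [hX] at hX'
  exact absurd hX' (by simp)

/-- From a position refuter can force a terminal word against any strategy. -/
lemma refwin_spoil {α : SF N T} (s : List (SF N T) → SF N T)
    (hs1 : ∀ p : List (SF N T), IsPlay G α p → Conforms (ProverTurn G) s p →
      ProverTurn G p.getLast! → Derives G p.getLast! (s p))
    {β : SF N T} (hβ : RefWin G β) :
    ∀ p : List (SF N T), IsPlay G α p → Conforms (ProverTurn G) s p →
      p.getLast! = β →
      ∃ p' : List (SF N T), IsPlay G α p' ∧ Conforms (ProverTurn G) s p' ∧
        IsTerminalSF p'.getLast! := by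
  induction hβ with
  | term β hterm =>
      intro p hp hc hl
      exact ⟨p, hp, hc, hl ▸ hterm⟩
  | ref w X γ η hη hX _ ih =>
      intro p hp hc hl
      have hnp : ¬ ProverTurn G p.getLast! := hl ▸ not_proverTurn G rfl hX
      have hd : Derives G p.getLast! (w.map Sum.inr ++ (η ++ γ)) :=
        hl ▸ ⟨w, X, η, γ, rfl, hη, rfl⟩
      obtain ⟨hp', hc'⟩ := play_extend G s p hp hc _ hd (fun h => absurd h hnp)
      exact ih _ hp' hc' (getLast!_concat _ _)
  | prov w X γ hX h ih =>
      intro p hp hc hl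
      have hpt : ProverTurn G p.getLast! := hl ▸ ⟨w, X, γ, rfl, hX⟩
      have hd := hs1 p hp hc hpt
      obtain ⟨w', X', η, γ', he, hη, hsp⟩ := hd
      rw [hl] at he
      obtain ⟨rfl, rfl, rfl⟩ := decomp_unique _ _ he
      obtain ⟨hp', hc'⟩ := play_extend G s p hp hc (s p)
        ⟨w, X, η, γ, hl, hη, hsp⟩ (fun _ => rfl)
      refine ih η hη _ hp' hc' ?_
      rw [getLast!_concat, hsp]

/-! ### The prover strategy -/

open Classical in
/-- Prover's move: a derivation step preserving `¬ Qk i₀` if possible,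
otherwise any derivation step, otherwise a dummy. -/
noncomputable def move (i₀ : ℕ) (β : SF N T) : SF N T :=
  if h : ∃ δ, Derives G β δ ∧ ¬ Qk G boxT i₀ δ then h.choose
  else if h' : ∃ δ, Derives G β δ then h'.choose else []

lemma move_derives {i₀ : ℕ} {β : SF N T} (h : ∃ δ, Derives G β δ) :
    Derives G β (move G boxT i₀ β) := by
  rw [move]
  by_cases h2 : ∃ δ, Derives G β δ ∧ ¬ Qk G boxT i₀ δ
  · rw [dif_pos h2]
    exact h2.choose_spec.1
  · rw [dif_neg h2, dif_pos h]
    exact h.choose_spec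

lemma move_bad {i₀ : ℕ} {β : SF N T} (h : ∃ δ, Derives G β δ ∧ ¬ Qk G boxT i₀ δ) :
    ¬ Qk G boxT i₀ (move G boxT i₀ β) := by
  rw [move, dif_pos h]
  exact h.choose_spec.2

lemma proverTurn_derives {β : SF N T} (h : ProverTurn G β) : ∃ δ, Derives G β δ := by
  obtain ⟨w, X, γ, rfl, hX⟩ := h
  refine ⟨w.map Sum.inr ++ ((G.rules X).head (G.rules_nonempty X) ++ γ),
    w, X, _, γ, rfl, List.head_mem _, rfl⟩

section Stab

variable {i₀ : ℕ}
  (hstab : ∀ k, i₀ ≤ k → ∀ X : N,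
    Formula.Equiv (approx G boxT k X) (approx G boxT i₀ X))

include hstab

lemma Pf_sigma_iff (X : N) :
    Pf (approx G boxT i₀ X) ↔
      if G.prover X then (∀ η ∈ G.rules X, Qk G boxT i₀ η)
      else (∃ η ∈ G.rules X, Qk G boxT i₀ η) := by
  rw [← Pf_approx_succ]
  exact (hstab (i₀ + 1) (Nat.le_succ i₀) X (fun _ => True)).symm

lemma prover_step {w : List T} {X : N} {γ : SF N T} (hX : G.prover X = true)
    (hbad : ¬ Qk G boxT i₀ (w.map Sum.inr ++ Sum.inl X :: γ)) :
    ∃ η ∈ G.rules X, ¬ Qk G boxT i₀ (w.map Sum.inr ++ (η ++ γ)) := by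
  rw [Qk_append, Qk_cons_inl] at hbad
  by_cases hγ : Qk G boxT i₀ γ
  · have hPX : ¬ Pf (approx G boxT i₀ X) := by
      intro hP
      exact hbad ⟨Qk_map_inr G boxT, hP, hγ⟩
    rw [Pf_sigma_iff G boxT hstab, if_pos hX] at hPX
    push_neg at hPX
    obtain ⟨η, hη, hQη⟩ := hPX
    refine ⟨η, hη, ?_⟩
    rw [Qk_append, Qk_append]
    rintro ⟨-, hQη', -⟩
    exact hQη hQη'
  · refine ⟨(G.rules X).head (G.rules_nonempty X), List.head_mem _, ?_⟩
    rw [Qk_append, Qk_append]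
    rintro ⟨-, -, h⟩
    exact hγ h

lemma refuter_step {w : List T} {X : N} {γ : SF N T} (hX : G.prover X = false)
    (hbad : ¬ Qk G boxT i₀ (w.map Sum.inr ++ Sum.inl X :: γ)) :
    ∀ η ∈ G.rules X, ¬ Qk G boxT i₀ (w.map Sum.inr ++ (η ++ γ)) := by
  rw [Qk_append, Qk_cons_inl] at hbad
  intro η hη
  rw [Qk_append, Qk_append]
  rintro ⟨-, hQη, hγ⟩
  refine hbad ⟨Qk_map_inr G boxT, ?_, hγ⟩
  rw [Pf_sigma_iff G boxT hstab, if_neg (by simp [hX])]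
  exact ⟨η, hη, hQη⟩

lemma invariant {α : SF N T} (hα : ¬ Qk G boxT i₀ α) (p : List (SF N T))
    (hp : IsPlay G α p)
    (hc : Conforms (ProverTurn G) (fun q => move G boxT i₀ q.getLast!) p) :
    ∀ i (h : i < p.length), ¬ Qk G boxT i₀ (p[i]'h) := by
  intro i
  induction i with
  | zero =>
      intro h
      have h0 : p[0]'h = α := by
        have := hp.1
        cases p with
        | nil => simp at h
        | cons a l => simp only [List.head?_cons, Option.some.injEq] at this; simpa using this
      rw [h0]
      exact hα
  | succ i ih =>
      intro h
      have hi : i < p.length := Nat.lt_of_succ_lt h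
      have hbad := ih hi
      have hder : Derives G (p[i]'hi) (p[i+1]'h) := by
        have := List.isChain_iff_getElem.mp hp.2 i (by omega)
        simpa using this
      obtain ⟨w, X, η, γ, hβ, hη, hnext⟩ := hder
      by_cases hpX : G.prover X = true
      · have hturn : ProverTurn G (p[i]'hi) := ⟨w, X, γ, hβ, hpX⟩
        have hcs := hc i h (by simpa using hturn)
        simp only [List.get_eq_getElem] at hcs
        rw [hcs, getLast!_take p i hi]
        apply move_bad
        rw [hβ] at hbad ⊢
        obtain ⟨η', hη', hQη'⟩ := prover_step G boxT hstab hpX hbad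
        exact ⟨_, ⟨w, X, η', γ, rfl, hη', rfl⟩, hQη'⟩
      · rw [hnext]
        rw [hβ] at hbad
        exact refuter_step G boxT hstab (by simpa using hpX) hbad η hη

end Stab

end Aux

/-- Prover has a winning strategy for the emptiness game from `α` iff the
least fixed-point solution satisfies `σ(α) ≡ false`. -/
theorem emptiness_game_iff_false [Mul B] [One B] (G : GameGrammar N T)
    (boxT : T → B) (α : SF N T) (i₀ : ℕ)
    (hstab : ∀ k, i₀ ≤ k → ∀ X : N,
      Formula.Equiv (approx G boxT k X) (approx G boxT i₀ X)) :
    ProverWinsEmptiness G α ↔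
      Formula.Equiv (interpSF boxT (approx G boxT i₀) α) Formula.fls := by
  rw [equiv_fls, Qk_interp]
  constructor
  · rintro ⟨s, hs1, hs2⟩ hQ
    have hrw : RefWin G α := by
      have := qk_refwin G boxT i₀ α [] hQ (RefWin.nil G)
      simpa using this
    obtain ⟨p', hp', hc', hterm⟩ := refwin_spoil G s hs1 hrw [α]
      (play_singleton G α) (conforms_singleton G s α) (getLast!_concat [] α)
    exact hs2 p' hp' hc' hterm
  · intro hα
    refine ⟨fun q => move G boxT i₀ q.getLast!, ?_, ?_⟩
    · intro p hp hc hpt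
      exact move_derives G boxT (proverTurn_derives G hpt)
    · intro p hp hc hterm
      have hne := play_ne_nil G hp
      have hlt : p.length - 1 < p.length := by
        cases p with
        | nil => exact absurd rfl hne
        | cons a l => simp
      have := invariant G boxT hstab hα p hp hc (p.length - 1) hlt
      rw [← play_getLast! G hp] at this
      exact this (Qk_terminal G boxT hterm)
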